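/- In the score game on a QBF Q.φ, the universal player has a winning strategy (in variant 2: the universal player wins if φ is falsified or the total score equals 1) if and only if the QBF Q.φ is false. -/
import Mathlib

namespace Stmt7

variable {n : ℕ}

/-- Universal variables with index `< k`. -/
def uB (E : Fin n → Prop) [DecidablePred E] (k : ℕ) : Finset (Fin n) :=
  Finset.univ.filter (fun v => ¬ E v ∧ v.val < k)

/-- Partial accumulated score after the first `k` variables. -/
def pscore (E : Fin n → Prop) [DecidablePred E] (s : Fin n → (Fin n → Bool) → ℚ)
    (k : ℕ) (α : Fin n → Bool) : ℚ :=
  ∑ u ∈ uB E k, s u α * (2 * (if α u then (1 : ℚ) else 0) - 1)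

/-- The intended running score for the score strategy built from an
evaluation-game strategy `τ`: `1` once a universal variable has disagreed with `τ`,
and `1 - 2 ^ (number of universal variables so far)` as long as all agree. -/
noncomputable def T (E : Fin n → Prop) [DecidablePred E]
    (τ : Fin n → (Fin n → Bool) → Bool) (k : ℕ) (α : Fin n → Bool) : ℚ :=
  if (∀ v : Fin n, v.val < k → ¬ E v → α v = τ v α) then 1 - 2 ^ (uB E k).card else 1

/-- Score strategy built from an evaluation-game strategy `τ`. -/
noncomputable def sOf (E : Fin n → Prop) [DecidablePred E]
    (τ : Fin n → (Fin n → Bool) → Bool) : Fin n → (Fin n → Bool) → ℚ :=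
  fun u α => (1 - 2 * (if τ u α then (1 : ℚ) else 0)) * (1 - T E τ u.val α)

variable (E : Fin n → Prop) [DecidablePred E]

lemma uB_zero : uB E 0 = ∅ := by
  ext v; simp [uB]

lemma mem_uB {k : ℕ} {v : Fin n} : v ∈ uB E k ↔ ¬ E v ∧ v.val < k := by
  simp [uB]

lemma uB_succ_of_E (k : ℕ) (hk : k < n) (h : E ⟨k, hk⟩) :
    uB E (k+1) = uB E k := by
  ext v
  simp only [mem_uB]
  constructor
  · rintro ⟨h1, h2⟩
    refine ⟨h1, ?_⟩
    rcases Nat.lt_succ_iff_lt_or_eq.mp h2 with h3 | h3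
    · exact h3
    · exact absurd (show E v by rw [show v = ⟨k, hk⟩ from Fin.ext h3]; exact h) h1
  · rintro ⟨h1, h2⟩; exact ⟨h1, Nat.lt_succ_of_lt h2⟩

lemma notMem_uB_self (k : ℕ) (hk : k < n) : (⟨k, hk⟩ : Fin n) ∉ uB E k := by
  simp [mem_uB]

lemma uB_succ_of_not_E (k : ℕ) (hk : k < n) (h : ¬ E ⟨k, hk⟩) :
    uB E (k+1) = insert ⟨k, hk⟩ (uB E k) := by
  ext v
  simp only [mem_uB, Finset.mem_insert]
  constructor
  · rintro ⟨h1, h2⟩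
    rcases Nat.lt_succ_iff_lt_or_eq.mp h2 with h3 | h3
    · exact Or.inr ⟨h1, h3⟩
    · exact Or.inl (Fin.ext h3)
  · rintro (rfl | ⟨h1, h2⟩)
    · exact ⟨h, Nat.lt_succ_self k⟩
    · exact ⟨h1, Nat.lt_succ_of_lt h2⟩

lemma uB_top : uB E n = Finset.univ.filter (fun u => ¬ E u) := by
  ext v
  simp [mem_uB, v.isLt]

lemma pscore_zero (s : Fin n → (Fin n → Bool) → ℚ) (α : Fin n → Bool) :
    pscore E s 0 α = 0 := by
  simp [pscore, uB_zero]

lemma pscore_succ_of_E (s : Fin n → (Fin n → Bool) → ℚ) (α : Fin n → Bool)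
    (k : ℕ) (hk : k < n) (h : E ⟨k, hk⟩) :
    pscore E s (k+1) α = pscore E s k α := by
  simp [pscore, uB_succ_of_E E k hk h]

lemma pscore_succ_of_not_E (s : Fin n → (Fin n → Bool) → ℚ) (α : Fin n → Bool)
    (k : ℕ) (hk : k < n) (h : ¬ E ⟨k, hk⟩) :
    pscore E s (k+1) α = pscore E s k α
      + s ⟨k, hk⟩ α * (2 * (if α ⟨k, hk⟩ then (1 : ℚ) else 0) - 1) := by
  rw [pscore, uB_succ_of_not_E E k hk h, Finset.sum_insert (notMem_uB_self E k hk)]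
  rw [pscore]; ring

lemma pscore_local (s : Fin n → (Fin n → Bool) → ℚ)
    (hs : ∀ u : Fin n, ∀ α α' : Fin n → Bool, (∀ v, v < u → α v = α' v) → s u α = s u α')
    (k : ℕ) (α α' : Fin n → Bool) (h : ∀ v : Fin n, v.val < k → α v = α' v) :
    pscore E s k α = pscore E s k α' := by
  refine Finset.sum_congr rfl (fun v hv => ?_)
  have hvk : v.val < k := ((mem_uB E).mp hv).2
  have h1 : s v α = s v α' := hs v α α' (fun w hw => h w (lt_trans (Fin.lt_def.mp hw) hvk))
  rw [h1, h v hvk]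

omit [DecidablePred E] in
lemma cond_succ (τ : Fin n → (Fin n → Bool) → Bool) (α : Fin n → Bool)
    (k : ℕ) (hk : k < n) :
    (∀ v : Fin n, v.val < k+1 → ¬ E v → α v = τ v α) ↔
      ((∀ v : Fin n, v.val < k → ¬ E v → α v = τ v α) ∧
        (¬ E ⟨k, hk⟩ → α ⟨k, hk⟩ = τ ⟨k, hk⟩ α)) := by
  constructor
  · intro H
    exact ⟨fun v h1 => H v (Nat.lt_succ_of_lt h1), H _ (Nat.lt_succ_self k)⟩
  · rintro ⟨H1, H2⟩ v h1 h2
    rcases Nat.lt_succ_iff_lt_or_eq.mp h1 with h3 | h3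
    · exact H1 v h3 h2
    · have hv : v = ⟨k, hk⟩ := Fin.ext h3
      subst hv; exact H2 h2

lemma T_zero (τ : Fin n → (Fin n → Bool) → Bool) (α : Fin n → Bool) :
    T E τ 0 α = 0 := by
  rw [T, if_pos (fun v h1 => absurd h1 (Nat.not_lt_zero _)), uB_zero]
  norm_num

lemma T_local (τ : Fin n → (Fin n → Bool) → Bool)
    (hτ : ∀ u : Fin n, ∀ α α' : Fin n → Bool, (∀ v, v < u → α v = α' v) → τ u α = τ u α')
    (k : ℕ) (α α' : Fin n → Bool) (h : ∀ v : Fin n, v.val < k → α v = α' v) :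
    T E τ k α = T E τ k α' := by
  have hiff : ∀ v : Fin n, v.val < k → ((α v = τ v α) ↔ (α' v = τ v α')) := by
    intro v hv
    rw [h v hv, hτ v α α' (fun w hw => h w (lt_trans (Fin.lt_def.mp hw) hv))]
  rw [T, T]
  refine if_congr ⟨fun H v h1 h2 => (hiff v h1).mp (H v h1 h2),
    fun H v h1 h2 => (hiff v h1).mpr (H v h1 h2)⟩ rfl rfl

lemma pscore_sOf (τ : Fin n → (Fin n → Bool) → Bool) (α : Fin n → Bool) :
    ∀ k, k ≤ n → pscore E (sOf E τ) k α = T E τ k α := by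
  intro k
  induction k with
  | zero => intro _; rw [pscore_zero, T_zero]
  | succ k ih =>
    intro hk1
    have hk : k < n := hk1
    have ihk := ih hk.le
    by_cases hE : E ⟨k, hk⟩
    · rw [pscore_succ_of_E E _ α k hk hE, ihk, T, T, uB_succ_of_E E k hk hE]
      refine if_congr ?_ rfl rfl
      rw [cond_succ E τ α k hk]
      tauto
    · rw [pscore_succ_of_not_E E _ α k hk hE, ihk]
      have hsOf : sOf E τ ⟨k, hk⟩ α
          = (1 - 2 * (if τ ⟨k, hk⟩ α then (1 : ℚ) else 0)) * (1 - T E τ k α) := rfl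
      by_cases hA : ∀ v : Fin n, v.val < k → ¬ E v → α v = τ v α
      · have hTk : T E τ k α = 1 - 2 ^ (uB E k).card := if_pos hA
        by_cases hag : α ⟨k, hk⟩ = τ ⟨k, hk⟩ α
        · have hA' : ∀ v : Fin n, v.val < k+1 → ¬ E v → α v = τ v α :=
            (cond_succ E τ α k hk).mpr ⟨hA, fun _ => hag⟩
          have hT1 : T E τ (k+1) α = 1 - 2 ^ ((uB E k).card + 1) := by
            rw [T, if_pos hA', uB_succ_of_not_E E k hk hE,
              Finset.card_insert_of_notMem (notMem_uB_self E k hk)]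
          rw [hT1, hTk, hsOf, hTk, hag]
          cases hb : τ ⟨k, hk⟩ α <;> simp [hb, pow_succ] <;> ring
        · have hA' : ¬ ∀ v : Fin n, v.val < k+1 → ¬ E v → α v = τ v α :=
            fun H => hag (H ⟨k, hk⟩ (Nat.lt_succ_self k) hE)
          have hT1 : T E τ (k+1) α = 1 := if_neg hA'
          rw [hT1, hsOf, hTk]
          cases hb : τ ⟨k, hk⟩ α
          · have hα : α ⟨k, hk⟩ = true := by
              cases hc : α ⟨k, hk⟩
              · exact absurd (hc.trans hb.symm) hag
              · rfl
            rw [hα]; norm_num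
          · have hα : α ⟨k, hk⟩ = false := by
              cases hc : α ⟨k, hk⟩
              · rfl
              · exact absurd (hc.trans hb.symm) hag
            rw [hα]; norm_num
      · have hTk : T E τ k α = 1 := if_neg hA
        have hA' : ¬ ∀ v : Fin n, v.val < k+1 → ¬ E v → α v = τ v α :=
          fun H => hA (fun v h1 h2 => H v (Nat.lt_succ_of_lt h1) h2)
        have hT1 : T E τ (k+1) α = 1 := if_neg hA'
        rw [hT1, hsOf, hTk]; ring

end Stmt7

open Stmt7 in
/-- The universal player has a winning strategy in variant 2 of the score game on `Q.φ`
(announcing, for each universal variable, a rational score depending only on earlier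
variables, and winning every play which either falsifies `φ` or has total score `1`)
if and only if the QBF `Q.φ` is false (i.e. the universal player has a winning strategy
in the evaluation game). Variables are `Fin n` in prefix order; `E` marks the
existential ones. -/
theorem stmt_7 (n : ℕ) (E : Fin n → Prop) [DecidablePred E]
    (φ : (Fin n → Bool) → Prop) :
    (∃ s : Fin n → (Fin n → Bool) → ℚ,
        (∀ u : Fin n, ∀ α α' : Fin n → Bool, (∀ v, v < u → α v = α' v) → s u α = s u α') ∧
        (∀ α : Fin n → Bool, ¬ φ α ∨
          ∑ u ∈ Finset.univ.filter (fun u => ¬ E u),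
            s u α * (2 * (if α u then (1 : ℚ) else 0) - 1) = 1))
      ↔
    (∃ τ : Fin n → (Fin n → Bool) → Bool,
        (∀ u : Fin n, ∀ α α' : Fin n → Bool, (∀ v, v < u → α v = α' v) → τ u α = τ u α') ∧
        (∀ α : Fin n → Bool, (∀ u, ¬ E u → α u = τ u α) → ¬ φ α)) := by
  constructor
  · rintro ⟨s, hloc, hwin⟩
    refine ⟨fun u α => if pscore E s u.val α + s u α = 1 then false else true, ?_, ?_⟩
    · intro u α α' h
      have h1 : pscore E s u.val α = pscore E s u.val α' :=
        pscore_local E s hloc u.val α α' (fun v hv => h v (Fin.lt_def.mpr hv))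
      simp only [h1, hloc u α α' h]
    · intro α hα
      have key : ∀ k, k ≤ n → pscore E s k α ≠ 1 := by
        intro k
        induction k with
        | zero => intro _; rw [pscore_zero]; norm_num
        | succ k ih =>
          intro hk1
          have hk : k < n := hk1
          have ihk := ih hk.le
          by_cases hE : E ⟨k, hk⟩
          · rw [pscore_succ_of_E E s α k hk hE]; exact ihk
          · rw [pscore_succ_of_not_E E s α k hk hE]
            have hτ := hα ⟨k, hk⟩ hE
            simp only at hτ
            by_cases hc : pscore E s k α + s ⟨k, hk⟩ α = 1
            · have hτ' : α ⟨k, hk⟩ = false := by rw [hτ, if_pos hc]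
              rw [hτ']
              intro heq
              apply ihk
              simp at heq
              linarith
            · have hτ' : α ⟨k, hk⟩ = true := by rw [hτ, if_neg hc]
              rw [hτ']
              intro heq
              apply hc
              simp at heq
              linarith
      rcases hwin α with h | h
      · exact h
      · exact absurd (by rw [pscore, uB_top]; exact h) (key n le_rfl)
  · rintro ⟨τ, hloc, hwin⟩
    refine ⟨sOf E τ, ?_, ?_⟩
    · intro u α α' h
      have h1 : T E τ u.val α = T E τ u.val α' :=
        T_local E τ hloc u.val α α' (fun v hv => h v (Fin.lt_def.mpr hv))
      rw [sOf, sOf, h1, hloc u α α' h]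
    · intro α
      by_cases h : ∀ u, ¬ E u → α u = τ u α
      · exact Or.inl (hwin α h)
      · right
        have h1 : (∑ u ∈ Finset.univ.filter (fun u => ¬ E u),
            sOf E τ u α * (2 * (if α u then (1 : ℚ) else 0) - 1))
              = pscore E (sOf E τ) n α := by
          rw [pscore, uB_top]
        rw [h1, pscore_sOf E τ α n le_rfl, T,
          if_neg (fun H => h (fun u hu => H u u.isLt hu))]
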